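/- Exact Gaussian mass of L_q: Let f(x) = exp(−πx²) be the Gaussian, extended multiplicatively to ℝ². For any real s > 0 and positive integer q, let ε' := ε_{ℤ, q/(s√2)} be the roughness of ℤ at parameter q/(s√2) and ε̃ := ε_{L_q,s}(H) be the H-roughness of L_q := ∪_{z∈ℤ}((z,z) + qℤ²) for H = span{(1,1)}. Then f_s(L_q) = (s/√2)·(1+ε')·(1+ε̃). -/

import Mathlib

noncomputable section

open MeasureTheory

/-- The Gaussian function `f(x) = exp(-πx²)`. -/
def gauss (x : ℝ) : ℝ := Real.exp (-(Real.pi * x ^ 2))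

/-- The lattice `L_q = ∪_{z∈ℤ} ((z,z) + qℤ²) ⊂ ℝ²`. -/
def LqSet (q : ℕ) : Set (ℝ × ℝ) :=
  {v | ∃ z w₁ w₂ : ℤ, v.1 = z + q * w₁ ∧ v.2 = z + q * w₂}

/-- `f_s(L_q)`: the sum over `L_q` of the multiplicative extension of `f` to `ℝ²`,
scaled by `s` (i.e. `f_s(x) = f(x/s)`). -/
def fsLq (f : ℝ → ℝ) (s : ℝ) (q : ℕ) : ℝ :=
  ∑' v : LqSet q, f ((v : ℝ × ℝ).1 / s) * f ((v : ℝ × ℝ).2 / s)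

/-- The Fourier transform of a real-valued function on ℝ. -/
def ft1 (g : ℝ → ℝ) (w : ℝ) : ℂ :=
  ∫ x : ℝ, (g x : ℂ) * Complex.exp (-(2 * Real.pi * Complex.I) * x * w)

/-- The Fourier transform of a real-valued function on ℝ². -/
def ft2 (g : ℝ × ℝ → ℝ) (w : ℝ × ℝ) : ℂ :=
  ∫ x : ℝ × ℝ, (g x : ℂ) * Complex.exp (-(2 * Real.pi * Complex.I) * (x.1 * w.1 + x.2 * w.2))

/-- The roughness `ε_{ℤ,t} = f̂_t(ℤ \ {0}) / f̂_t(0)` of the integer lattice (self-dual)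
at parameter `t`, for the Gaussian `f`. -/
def roughZ (t : ℝ) : ℝ :=
  (∑' k : {k : ℤ // k ≠ 0}, (ft1 (fun x => gauss (x / t)) ((k : ℤ) : ℝ)).re) /
    (ft1 (fun x => gauss (x / t)) 0).re

/-- The line `H = span{(1,1)} ⊂ ℝ²`. -/
def Hline : Set (ℝ × ℝ) := {v | ∃ a : ℝ, v = (a, a)}

/-- The orthogonal complement `H^⊥` of `H = span{(1,1)}`. -/
def Hperp : Set (ℝ × ℝ) := {w | ∀ v ∈ Hline, v.1 * w.1 + v.2 * w.2 = 0}

/-- The dual lattice of `L_q`. -/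
def dualLq (q : ℕ) : Set (ℝ × ℝ) :=
  {w | ∀ v ∈ LqSet q, ∃ k : ℤ, v.1 * w.1 + v.2 * w.2 = (k : ℝ)}

/-- The `H`-roughness `ε_{L_q,s}(H) = f̂_s(L_q^* \ H^⊥) / f̂_s(L_q^* ∩ H^⊥)` of `L_q`
for `H = span{(1,1)}`, for the Gaussian `f` extended multiplicatively to ℝ². -/
def roughLqH (q : ℕ) (s : ℝ) : ℝ :=
  (∑' w : ↥(dualLq q \ Hperp),
      (ft2 (fun v => gauss (v.1 / s) * gauss (v.2 / s)) (w : ℝ × ℝ)).re) /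
    (∑' w : ↥(dualLq q ∩ Hperp),
      (ft2 (fun v => gauss (v.1 / s) * gauss (v.2 / s)) (w : ℝ × ℝ)).re)

/- ---------------------------------------------------------------------------
Auxiliary lemmas
--------------------------------------------------------------------------- -/

open Real FourierTransform

lemma summable_gauss (a : ℝ) (ha : 0 < a) : Summable fun n : ℤ => Real.exp (-(a * n ^ 2)) := by
  apply Summable.of_nat_of_neg <;>
  · simp only [Int.cast_natCast, Int.cast_neg, neg_sq]
    refine Summable.of_nonneg_of_le (fun n => (Real.exp_pos _).le) (fun n => ?_)
      (summable_geometric_of_lt_one (Real.exp_pos (-a)).le (Real.exp_lt_one_iff.2 (by linarith)))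
    rw [← Real.exp_nat_mul]
    apply Real.exp_le_exp.2
    have h : (n:ℝ) ≤ (n:ℝ) ^ 2 := by exact_mod_cast Nat.le_self_pow two_ne_zero n
    nlinarith

lemma summable_gauss' (c : ℝ) (hc : 0 < c) :
    Summable fun n : ℤ => Real.exp (-(π * (c ^ 2 * (n:ℝ) ^ 2))) := by
  refine (summable_gauss (π * c ^ 2) (by positivity)).congr fun n => ?_
  congr 1
  ring

lemma summable_G (c : ℝ) (hc : 0 < c) (q : ℕ) (hq : 0 < q) :
    Summable fun p : ℤ × ℤ =>
      Real.exp (-(π * (c ^ 2 * (((p.1:ℝ)) ^ 2 + ((p.1:ℝ) + q * p.2) ^ 2)))) := by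
  have hf := (summable_gauss' c hc).mul_of_nonneg (summable_gauss' c hc)
    (fun n => (Real.exp_pos _).le) (fun n => (Real.exp_pos _).le)
  have hj : Function.Injective (fun p : ℤ × ℤ => (p.1, p.1 + q * p.2)) := by
    intro p p' h
    simp only [Prod.mk.injEq] at h
    obtain ⟨h1, h2⟩ := h
    rw [h1] at h2
    have : (q:ℤ) * p.2 = q * p'.2 := by omega
    have hq' : (q:ℤ) ≠ 0 := by exact_mod_cast hq.ne'
    exact Prod.ext h1 (by exact mul_left_cancel₀ hq' this)
  refine (hf.comp_injective hj).congr fun p => ?_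
  show _ * _ = _
  rw [← Real.exp_add]
  congr 1
  push_cast
  ring

lemma cpow_sq_half (c : ℝ) (hc : 0 < c) : (((c ^ 2 : ℝ)) : ℂ) ^ (1/2 : ℂ) = (c : ℂ) := by
  rw [show (1/2:ℂ) = ((1/2:ℝ):ℂ) by norm_num, ← Complex.ofReal_cpow (by positivity)]
  norm_cast
  rw [← Real.rpow_natCast c 2, ← Real.rpow_mul hc.le]
  norm_num

lemma rpow_sq_half (c : ℝ) (hc : 0 < c) : (c ^ 2 : ℝ) ^ (1/2 : ℝ) = c := by
  rw [← Real.rpow_natCast c 2, ← Real.rpow_mul hc.le]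
  norm_num
lemma ft1_gauss (t : ℝ) (ht : 0 < t) (w : ℝ) :
    ft1 (fun x => gauss (x / t)) w = ((t * Real.exp (-(Real.pi * (t ^ 2 * w ^ 2))) : ℝ) : ℂ) := by
  have hb : (0:ℝ) < 1 / t ^ 2 := by positivity
  have ht' : (t:ℂ) ≠ 0 := by exact_mod_cast ht.ne'
  have h1 : ft1 (fun x => gauss (x / t)) w
      = 𝓕 (fun x : ℝ => (Complex.exp (-(Real.pi : ℂ) * ((1 / t ^ 2 : ℝ) : ℂ) * (x:ℂ) ^ 2))) w := by
    rw [Real.fourier_real_eq_integral_exp_smul]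
    unfold ft1 gauss
    congr 1
    ext x
    rw [smul_eq_mul]
    have e1 : ((Real.exp (-(Real.pi * (x/t) ^ 2)) : ℝ) : ℂ)
        = Complex.exp (-(Real.pi:ℂ) * ((1/t^2:ℝ):ℂ) * (x:ℂ) ^ 2) := by
      rw [Complex.ofReal_exp]
      congr 1
      push_cast
      field_simp
    have e2 : Complex.exp (-(2 * (Real.pi:ℂ) * Complex.I) * (x:ℂ) * (w:ℂ))
        = Complex.exp (((-2 * Real.pi * x * w : ℝ) : ℂ) * Complex.I) := by
      congr 1
      push_cast
      ring
    rw [e1, e2]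
    ring
  rw [h1, fourier_gaussian_pi
    (show 0 < (((1 / t ^ 2 : ℝ) : ℂ)).re by rw [Complex.ofReal_re]; exact hb)]
  have h2 : ((1 / t ^ 2 : ℝ) : ℂ) ^ (1 / 2 : ℂ) = ((1 / t : ℝ) : ℂ) := by
    rw [show (1/2 : ℂ) = ((1/2:ℝ):ℂ) by norm_num, ← Complex.ofReal_cpow hb.le]
    norm_cast
    rw [show (1 / t ^ 2 : ℝ) = (1/t) ^ (2:ℕ) by ring, ← Real.rpow_natCast (1/t) 2,
      ← Real.rpow_mul (by positivity)]
    norm_num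
  have h3 : -(Real.pi:ℂ) / ((1 / t ^ 2 : ℝ) : ℂ) * (w:ℂ) ^ 2
      = ((-(Real.pi * (t ^ 2 * w ^ 2)) : ℝ) : ℂ) := by
    push_cast
    field_simp
  show 1 / ((1/t^2:ℝ):ℂ) ^ (1/2:ℂ) * Complex.exp (-(Real.pi:ℂ) / ((1/t^2:ℝ):ℂ) * (w:ℂ) ^ 2) = _
  rw [h2, h3, ← Complex.ofReal_exp]
  push_cast
  rw [one_div_one_div]
lemma ft2_gauss (s : ℝ) (hs : 0 < s) (w : ℝ × ℝ) :
    ft2 (fun v => gauss (v.1 / s) * gauss (v.2 / s)) w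
      = ((s ^ 2 * Real.exp (-(Real.pi * (s ^ 2 * (w.1 ^ 2 + w.2 ^ 2)))) : ℝ) : ℂ) := by
  have h1 : ft2 (fun v => gauss (v.1 / s) * gauss (v.2 / s)) w
      = (∫ x : ℝ, ((gauss (x / s) : ℝ) : ℂ) * Complex.exp (-(2 * Real.pi * Complex.I) * x * w.1))
        * ∫ x : ℝ, ((gauss (x / s) : ℝ) : ℂ) * Complex.exp (-(2 * Real.pi * Complex.I) * x * w.2) := by
    unfold ft2
    rw [MeasureTheory.Measure.volume_eq_prod, ← MeasureTheory.integral_prod_mul]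
    congr 1
    ext x
    show _ * Complex.exp _ = _
    rw [mul_mul_mul_comm, ← Complex.exp_add, ← Complex.ofReal_mul]
    congr 2 <;> push_cast <;> ring
  rw [h1]
  rw [show (∫ x : ℝ, ((gauss (x / s) : ℝ) : ℂ) * Complex.exp (-(2 * Real.pi * Complex.I) * x * w.1))
      = ft1 (fun x => gauss (x / s)) w.1 from rfl,
    show (∫ x : ℝ, ((gauss (x / s) : ℝ) : ℂ) * Complex.exp (-(2 * Real.pi * Complex.I) * x * w.2))
      = ft1 (fun x => gauss (x / s)) w.2 from rfl,
    ft1_gauss s hs w.1, ft1_gauss s hs w.2, ← Complex.ofReal_mul]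
  congr 1
  rw [mul_mul_mul_comm, ← Real.exp_add]
  congr 1
  · ring
  · congr 1
    ring
lemma mem_Hperp (w : ℝ × ℝ) : w ∈ Hperp ↔ w.2 = -w.1 := by
  constructor
  · intro h
    have := h (1, 1) ⟨1, rfl⟩
    simp at this
    linarith
  · intro h v hv
    obtain ⟨a, rfl⟩ := hv
    simp [h]
    try ring

lemma mem_dualLq (q : ℕ) (hq : 0 < q) (w : ℝ × ℝ) :
    w ∈ dualLq q ↔ ∃ c d : ℤ, ((q:ℤ) ∣ c + d) ∧ w.1 = c / q ∧ w.2 = d / q := by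
  have hq0 : (q:ℝ) ≠ 0 := by positivity
  constructor
  · intro h
    obtain ⟨c, hc⟩ := h ((q:ℝ), 0) ⟨0, 1, 0, by push_cast; ring, by push_cast; ring⟩
    obtain ⟨d, hd⟩ := h (0, (q:ℝ)) ⟨0, 0, 1, by push_cast; ring, by push_cast; ring⟩
    obtain ⟨e, he⟩ := h (1, 1) ⟨1, 0, 0, by push_cast; ring, by push_cast; ring⟩
    simp only [zero_mul, add_zero, zero_add, one_mul] at hc hd he
    refine ⟨c, d, ⟨e, ?_⟩, ?_, ?_⟩
    · have : (c:ℝ) + d = q * e := by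
        rw [← hc, ← hd, ← mul_add, he]
      exact_mod_cast this
    · field_simp [← hc]; linarith
    · field_simp [← hd]; linarith
  · rintro ⟨c, d, ⟨e, he⟩, h1, h2⟩
    intro v hv
    obtain ⟨z, w₁, w₂, hv1, hv2⟩ := hv
    refine ⟨z * e + w₁ * c + w₂ * d, ?_⟩
    rw [hv1, hv2, h1, h2]
    have he' : (c:ℝ) + d = q * e := by exact_mod_cast congrArg (Int.cast : ℤ → ℝ) he
    push_cast
    field_simp
    linear_combination (z : ℝ) * he'
set_option maxHeartbeats 3200000 in
lemma theta_key (a : ℝ) (ha : 0 < a) (q : ℕ) (hq : 0 < q) :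
    ∑' p : ℤ × ℤ, Real.exp (-(π * (a ^ 2 * (((p.1:ℝ)) ^ 2 + ((p.1:ℝ) + q * p.2) ^ 2))))
    = 1/(q * a ^ 2) * ∑' p : ℤ × ℤ,
        Real.exp (-(π * ((1/(q * a)) ^ 2 * (((p.1:ℝ)) ^ 2 + ((p.1:ℝ) + q * p.2) ^ 2)))) := by
  have hq' : (0:ℝ) < q := by exact_mod_cast hq
  have hqC : ((q:ℕ) : ℂ) ≠ 0 := by exact_mod_cast hq'.ne'
  have haC : (a : ℂ) ≠ 0 := by exact_mod_cast ha.ne'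
  have hb : (0:ℝ) < 1/(q*a) := by positivity
  have hπC : (π:ℂ) ≠ 0 := by exact_mod_cast Real.pi_ne_zero
  -- one-dimensional complex summabilities
  have habs : ∀ (x y : ℝ), ‖Complex.exp ((x:ℂ) + (y:ℂ) * Complex.I)‖ = Real.exp x := by
    intro x y
    rw [Complex.norm_exp]
    congr 1
    simp
  have habs' : ∀ (x : ℝ), ‖Complex.exp ((x:ℂ))‖ = Real.exp x := by
    intro x
    rw [Complex.norm_exp, Complex.ofReal_re]
  -- C1 : Poisson in the second variable
  have C1 : ∀ z : ℤ,
      ∑' n : ℤ, Complex.exp ((-(π * (a ^ 2 * ((z:ℝ) + q * n) ^ 2)) : ℝ) : ℂ)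
      = ((1/(q*a) : ℝ) : ℂ) * ∑' k : ℤ,
          Complex.exp (((-(π * ((1/(q*a)) ^ 2 * (k:ℝ) ^ 2)) : ℝ) : ℂ)
            + ((-(2 * π * z * k / q) : ℝ) : ℂ) * Complex.I) := by
    intro z
    have hpos : 0 < ((((1/(q*a)) ^ 2 : ℝ)) : ℂ).re := by
      rw [Complex.ofReal_re]; positivity
    have P := Complex.tsum_exp_neg_quadratic hpos (-Complex.I * z / q)
    rw [cpow_sq_half _ hb] at P
    have e1 : ∀ n : ℤ,
        Complex.exp (-(π:ℂ) * ((((1/(q*a)) ^ 2 : ℝ)) : ℂ) * (n:ℂ) ^ 2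
            + 2 * π * (-Complex.I * z / q) * n)
        = Complex.exp (((-(π * ((1/(q*a)) ^ 2 * (n:ℝ) ^ 2)) : ℝ) : ℂ)
            + ((-(2 * π * z * n / q) : ℝ) : ℂ) * Complex.I) := by
      intro n
      congr 1
      push_cast
      ring
    have e2 : ∀ n : ℤ,
        Complex.exp (-(π:ℂ) / ((((1/(q*a)) ^ 2 : ℝ)) : ℂ) * ((n:ℂ) + Complex.I * (-Complex.I * z / q)) ^ 2)
        = Complex.exp ((-(π * (a ^ 2 * ((z:ℝ) + q * n) ^ 2)) : ℝ) : ℂ) := by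
      intro n
      congr 1
      have hI : Complex.I * (-Complex.I * (z:ℂ) / (q:ℂ)) = (z:ℂ)/(q:ℂ) := by
        rw [mul_div_assoc, ← mul_assoc, mul_neg, Complex.I_mul_I, neg_neg, one_mul]
      rw [hI]
      push_cast
      field_simp
      ring
    rw [tsum_congr e1, tsum_congr e2] at P
    rw [P, ← mul_assoc]
    have hne : ((1/(q*a) : ℝ) : ℂ) ≠ 0 := by exact_mod_cast hb.ne'
    rw [mul_one_div, div_self hne, one_mul]
  -- C2 : Poisson in the first variable
  have C2 : ∀ k : ℤ,
      ∑' z : ℤ, Complex.exp (((-(π * (a ^ 2 * (z:ℝ) ^ 2)) : ℝ) : ℂ)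
          + ((-(2 * π * z * k / q) : ℝ) : ℂ) * Complex.I)
      = ((1/a : ℝ) : ℂ) * ∑' m : ℤ,
          Complex.exp ((-(π * ((1/(q*a)) ^ 2 * ((k:ℝ) + q * m) ^ 2)) : ℝ) : ℂ) := by
    intro k
    have hpos : 0 < (((a ^ 2 : ℝ)) : ℂ).re := by
      rw [Complex.ofReal_re]; positivity
    have P := Complex.tsum_exp_neg_quadratic hpos (-Complex.I * k / q)
    rw [cpow_sq_half _ ha] at P
    have e1 : ∀ z : ℤ,
        Complex.exp (-(π:ℂ) * (((a ^ 2 : ℝ)) : ℂ) * (z:ℂ) ^ 2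
            + 2 * π * (-Complex.I * k / q) * z)
        = Complex.exp (((-(π * (a ^ 2 * (z:ℝ) ^ 2)) : ℝ) : ℂ)
            + ((-(2 * π * z * k / q) : ℝ) : ℂ) * Complex.I) := by
      intro z
      congr 1
      push_cast
      ring
    have e2 : ∀ m : ℤ,
        Complex.exp (-(π:ℂ) / (((a ^ 2 : ℝ)) : ℂ) * ((m:ℂ) + Complex.I * (-Complex.I * k / q)) ^ 2)
        = Complex.exp ((-(π * ((1/(q*a)) ^ 2 * ((k:ℝ) + q * m) ^ 2)) : ℝ) : ℂ) := by
      intro m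
      congr 1
      have hI : Complex.I * (-Complex.I * (k:ℂ) / (q:ℂ)) = (k:ℂ)/(q:ℂ) := by
        rw [mul_div_assoc, ← mul_assoc, mul_neg, Complex.I_mul_I, neg_neg, one_mul]
      rw [hI]
      push_cast
      field_simp
      ring
    rw [tsum_congr e1, tsum_congr e2] at P
    rw [P]
    congr 1
    push_cast
    ring
  -- summabilities
  have SGa := summable_G a ha q hq
  have SGb := summable_G _ hb q hq
  have SGaC : Summable (fun p : ℤ × ℤ =>
      Complex.exp ((-(π * (a ^ 2 * (((p.1:ℝ)) ^ 2 + ((p.1:ℝ) + q * p.2) ^ 2))) : ℝ) : ℂ)) :=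
    (Complex.summable_ofReal.2 SGa).congr fun p => Complex.ofReal_exp _
  have SGbC : Summable (fun p : ℤ × ℤ =>
      Complex.exp ((-(π * ((1/(q*a)) ^ 2 * (((p.1:ℝ)) ^ 2 + ((p.1:ℝ) + q * p.2) ^ 2))) : ℝ) : ℂ)) :=
    (Complex.summable_ofReal.2 SGb).congr fun p => Complex.ofReal_exp _
  have SmixNorm : Summable (fun p : ℤ × ℤ =>
      Real.exp (-(π * (a ^ 2 * ((p.1:ℝ)) ^ 2))) *
        Real.exp (-(π * ((1/(q*a)) ^ 2 * ((p.2:ℝ)) ^ 2)))) :=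
    (summable_gauss' a ha).mul_of_nonneg (summable_gauss' _ hb)
      (fun n => (Real.exp_pos _).le) (fun n => (Real.exp_pos _).le)
  have normFmix : ∀ z k : ℤ,
      ‖Complex.exp ((-(π * (a ^ 2 * (z:ℝ) ^ 2)) : ℝ) : ℂ) *
        Complex.exp (((-(π * ((1/(q*a)) ^ 2 * (k:ℝ) ^ 2)) : ℝ) : ℂ)
          + ((-(2 * π * z * k / q) : ℝ) : ℂ) * Complex.I)‖
      = Real.exp (-(π * (a ^ 2 * (z:ℝ) ^ 2))) *
          Real.exp (-(π * ((1/(q*a)) ^ 2 * (k:ℝ) ^ 2))) := by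
    intro z k
    rw [norm_mul, habs', habs]
  have Smix : Summable (fun p : ℤ × ℤ =>
      Complex.exp ((-(π * (a ^ 2 * ((p.1:ℝ)) ^ 2)) : ℝ) : ℂ) *
        Complex.exp (((-(π * ((1/(q*a)) ^ 2 * ((p.2:ℝ)) ^ 2)) : ℝ) : ℂ)
          + ((-(2 * π * p.1 * p.2 / q) : ℝ) : ℂ) * Complex.I)) :=
    Summable.of_norm (SmixNorm.congr fun p => (normFmix p.1 p.2).symm)
  have SmixRow : ∀ z : ℤ, Summable (fun k : ℤ =>
      Complex.exp ((-(π * (a ^ 2 * (z:ℝ) ^ 2)) : ℝ) : ℂ) *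
        Complex.exp (((-(π * ((1/(q*a)) ^ 2 * (k:ℝ) ^ 2)) : ℝ) : ℂ)
          + ((-(2 * π * z * k / q) : ℝ) : ℂ) * Complex.I)) := by
    intro z
    refine Summable.of_norm (Summable.congr (((summable_gauss' _ hb).mul_left
      (Real.exp (-(π * (a ^ 2 * (z:ℝ) ^ 2))))) ) fun k => (normFmix z k).symm)
  have SmixCol : ∀ k : ℤ, Summable (fun z : ℤ =>
      Complex.exp ((-(π * (a ^ 2 * (z:ℝ) ^ 2)) : ℝ) : ℂ) *
        Complex.exp (((-(π * ((1/(q*a)) ^ 2 * (k:ℝ) ^ 2)) : ℝ) : ℂ)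
          + ((-(2 * π * z * k / q) : ℝ) : ℂ) * Complex.I)) := by
    intro k
    refine Summable.of_norm (Summable.congr (((summable_gauss' a ha).mul_right
      (Real.exp (-(π * ((1/(q*a)) ^ 2 * (k:ℝ) ^ 2)))))) fun z => (normFmix z k).symm)
  -- the main complex computation
  have main : ((∑' p : ℤ × ℤ,
        Real.exp (-(π * (a ^ 2 * (((p.1:ℝ)) ^ 2 + ((p.1:ℝ) + q * p.2) ^ 2)))) : ℝ) : ℂ)
      = ((1/(q * a ^ 2) : ℝ) : ℂ) * ((∑' p : ℤ × ℤ,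
          Real.exp (-(π * ((1/(q * a)) ^ 2 * (((p.1:ℝ)) ^ 2 + ((p.1:ℝ) + q * p.2) ^ 2)))) : ℝ) : ℂ) := by
    rw [Complex.ofReal_tsum, Complex.ofReal_tsum]
    calc
      ∑' p : ℤ × ℤ, ((Real.exp (-(π * (a ^ 2 * (((p.1:ℝ)) ^ 2 + ((p.1:ℝ) + q * p.2) ^ 2))) : ℝ) : ℂ))
          = ∑' p : ℤ × ℤ,
              Complex.exp ((-(π * (a ^ 2 * (((p.1:ℝ)) ^ 2 + ((p.1:ℝ) + q * p.2) ^ 2))) : ℝ) : ℂ) :=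
        tsum_congr fun p => Complex.ofReal_exp _
      _ = ∑' z : ℤ, ∑' w : ℤ,
              Complex.exp ((-(π * (a ^ 2 * ((z:ℝ) ^ 2 + ((z:ℝ) + q * w) ^ 2))) : ℝ) : ℂ) :=
        SGaC.tsum_prod' fun z => SGaC.prod_factor z
      _ = ∑' z : ℤ, (Complex.exp ((-(π * (a ^ 2 * (z:ℝ) ^ 2)) : ℝ) : ℂ) *
            ∑' w : ℤ, Complex.exp ((-(π * (a ^ 2 * ((z:ℝ) + q * w) ^ 2)) : ℝ) : ℂ)) := by
        refine tsum_congr fun z => ?_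
        rw [← tsum_mul_left]
        refine tsum_congr fun w => ?_
        rw [← Complex.exp_add, ← Complex.ofReal_add]
        congr 2
        ring
      _ = ∑' z : ℤ, (Complex.exp ((-(π * (a ^ 2 * (z:ℝ) ^ 2)) : ℝ) : ℂ) *
            (((1/(q*a) : ℝ) : ℂ) * ∑' k : ℤ,
              Complex.exp (((-(π * ((1/(q*a)) ^ 2 * (k:ℝ) ^ 2)) : ℝ) : ℂ)
                + ((-(2 * π * z * k / q) : ℝ) : ℂ) * Complex.I))) :=
        tsum_congr fun z => by rw [C1 z]
      _ = ∑' z : ℤ, (((1/(q*a) : ℝ) : ℂ) * ∑' k : ℤ,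
            Complex.exp ((-(π * (a ^ 2 * (z:ℝ) ^ 2)) : ℝ) : ℂ) *
              Complex.exp (((-(π * ((1/(q*a)) ^ 2 * (k:ℝ) ^ 2)) : ℝ) : ℂ)
                + ((-(2 * π * z * k / q) : ℝ) : ℂ) * Complex.I)) := by
        refine tsum_congr fun z => ?_
        rw [tsum_mul_left]
        ring
      _ = ((1/(q*a) : ℝ) : ℂ) * ∑' z : ℤ, ∑' k : ℤ,
            Complex.exp ((-(π * (a ^ 2 * (z:ℝ) ^ 2)) : ℝ) : ℂ) *
              Complex.exp (((-(π * ((1/(q*a)) ^ 2 * (k:ℝ) ^ 2)) : ℝ) : ℂ)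
                + ((-(2 * π * z * k / q) : ℝ) : ℂ) * Complex.I) := tsum_mul_left
      _ = ((1/(q*a) : ℝ) : ℂ) * ∑' k : ℤ, ∑' z : ℤ,
            Complex.exp ((-(π * (a ^ 2 * (z:ℝ) ^ 2)) : ℝ) : ℂ) *
              Complex.exp (((-(π * ((1/(q*a)) ^ 2 * (k:ℝ) ^ 2)) : ℝ) : ℂ)
                + ((-(2 * π * z * k / q) : ℝ) : ℂ) * Complex.I) := by
        congr 1
        have Smix' : Summable (Function.uncurry fun z k : ℤ =>
            Complex.exp ((-(π * (a ^ 2 * (z:ℝ) ^ 2)) : ℝ) : ℂ) *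
              Complex.exp (((-(π * ((1/(q*a)) ^ 2 * (k:ℝ) ^ 2)) : ℝ) : ℂ)
                + ((-(2 * π * z * k / q) : ℝ) : ℂ) * Complex.I)) := Smix
        exact (Summable.tsum_comm' Smix' SmixRow SmixCol).symm
      _ = ((1/(q*a) : ℝ) : ℂ) * ∑' k : ℤ,
            (Complex.exp ((-(π * ((1/(q*a)) ^ 2 * (k:ℝ) ^ 2)) : ℝ) : ℂ) *
              ∑' z : ℤ, Complex.exp (((-(π * (a ^ 2 * (z:ℝ) ^ 2)) : ℝ) : ℂ)
                + ((-(2 * π * z * k / q) : ℝ) : ℂ) * Complex.I)) := by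
        congr 1
        refine tsum_congr fun k => ?_
        rw [← tsum_mul_left]
        refine tsum_congr fun z => ?_
        rw [← Complex.exp_add, ← Complex.exp_add]
        congr 1
        ring
      _ = ((1/(q*a) : ℝ) : ℂ) * ∑' k : ℤ,
            (Complex.exp ((-(π * ((1/(q*a)) ^ 2 * (k:ℝ) ^ 2)) : ℝ) : ℂ) *
              (((1/a : ℝ) : ℂ) * ∑' m : ℤ,
                Complex.exp ((-(π * ((1/(q*a)) ^ 2 * ((k:ℝ) + q * m) ^ 2)) : ℝ) : ℂ))) := by
        congr 1
        exact tsum_congr fun k => by rw [C2 k]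
      _ = ((1/(q*a) : ℝ) : ℂ) * ∑' k : ℤ, (((1/a : ℝ) : ℂ) * ∑' m : ℤ,
            Complex.exp ((-(π * ((1/(q*a)) ^ 2 * ((k:ℝ) ^ 2 + ((k:ℝ) + q * m) ^ 2))) : ℝ) : ℂ)) := by
        congr 1
        refine tsum_congr fun k => ?_
        rw [mul_left_comm]
        congr 1
        rw [← tsum_mul_left]
        exact tsum_congr fun m => by
          rw [← Complex.exp_add, ← Complex.ofReal_add]
          congr 2
          ring
      _ = ((1/(q*a) : ℝ) : ℂ) * (((1/a : ℝ) : ℂ) * ∑' k : ℤ, ∑' m : ℤ,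
            Complex.exp ((-(π * ((1/(q*a)) ^ 2 * ((k:ℝ) ^ 2 + ((k:ℝ) + q * m) ^ 2))) : ℝ) : ℂ)) := by
        rw [tsum_mul_left]
      _ = ((1/(q * a ^ 2) : ℝ) : ℂ) * ∑' p : ℤ × ℤ,
            Complex.exp ((-(π * ((1/(q * a)) ^ 2 * (((p.1:ℝ)) ^ 2 + ((p.1:ℝ) + q * p.2) ^ 2))) : ℝ) : ℂ) := by
        rw [← mul_assoc, ← Complex.ofReal_mul,
          (SGbC.tsum_prod' fun k => SGbC.prod_factor k).symm]
        congr 2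
        field_simp
      _ = ((1/(q * a ^ 2) : ℝ) : ℂ) * ∑' p : ℤ × ℤ,
            ((Real.exp (-(π * ((1/(q * a)) ^ 2 * (((p.1:ℝ)) ^ 2 + ((p.1:ℝ) + q * p.2) ^ 2))) : ℝ) : ℂ)) := by
        congr 1
        exact tsum_congr fun p => (Complex.ofReal_exp _).symm
  exact_mod_cast main

set_option maxHeartbeats 3200000 in
/-- Exact Gaussian mass of `L_q`:
`f_s(L_q) = (s/√2)·(1 + ε_{ℤ,q/(s√2)})·(1 + ε_{L_q,s}(H))`. -/
theorem gaussian_mass_Lq (s : ℝ) (hs : 0 < s) (q : ℕ) (hq : 0 < q) :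
    fsLq gauss s q =
      s / Real.sqrt 2 * (1 + roughZ (q / (s * Real.sqrt 2))) * (1 + roughLqH q s) := by
  have hq' : (0:ℝ) < q := by exact_mod_cast hq
  have hq0 : (q:ℝ) ≠ 0 := hq'.ne'
  have hs0 : s ≠ 0 := hs.ne'
  have h2 : (0:ℝ) < Real.sqrt 2 := Real.sqrt_pos.2 two_pos
  have h2sq : Real.sqrt 2 ^ 2 = 2 := Real.sq_sqrt two_pos.le
  have ht : 0 < (q:ℝ) / (s * Real.sqrt 2) := by positivity
  have hsq : 0 < s / q := by positivity
  have castdiv_inj : ∀ c c' : ℤ, (c:ℝ)/q = (c':ℝ)/q → c = c' := by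
    intro c c' h
    have : (c:ℝ) = c' := by
      field_simp at h
      exact_mod_cast h
    exact_mod_cast this
  -- dual-side summand
  set g : ℤ × ℤ → ℝ := fun p =>
    Real.exp (-(π * ((s/q) ^ 2 * (p.1:ℝ) ^ 2))) *
      Real.exp (-(π * ((s/q) ^ 2 * (p.2:ℝ) ^ 2))) with hg
  have gpos : ∀ p, 0 < g p := fun p => mul_pos (Real.exp_pos _) (Real.exp_pos _)
  have gsum : Summable g := (summable_gauss' _ hsq).mul_of_nonneg (summable_gauss' _ hsq)
      (fun n => (Real.exp_pos _).le) (fun n => (Real.exp_pos _).le)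
  set D0 : Set (ℤ × ℤ) := {p | (q:ℤ) ∣ p.1 + p.2 ∧ p.1 + p.2 ≠ 0} with hD0
  set Dz : Set (ℤ × ℤ) := {p | p.1 + p.2 = 0} with hDz
  set SD0 := ∑' p : ↥D0, g p with hSD0
  set SDz := ∑' p : ↥Dz, g p with hSDzdef
  -- Dz sum as a sum over ℤ
  let fZ : ℤ → ↥Dz := fun c => ⟨(c, -c), by simp [hDz]⟩
  have fZbij : Function.Bijective fZ := by
    constructor
    · intro c c' h
      have h' := Subtype.ext_iff.1 h
      simp only [fZ, Prod.mk.injEq] at h'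
      exact h'.1
    · rintro ⟨⟨c, d⟩, hp⟩
      refine ⟨c, ?_⟩
      have hd : d = -c := by
        have : c + d = 0 := hp
        omega
      simp [fZ, hd]
  have hSDz_eq : SDz = ∑' c : ℤ, g (c, -c) := by
    rw [hSDzdef, ← (Equiv.ofBijective fZ fZbij).tsum_eq]
    rfl
  have hSDzpos : 0 < SDz := by
    rw [hSDzdef]
    exact Summable.tsum_pos (gsum.subtype _) (fun p => (gpos _).le) ⟨(0,0), by simp [hDz]⟩ (gpos _)
  -- the dual \ Hperp sum
  have fA_mem : ∀ p : ↥D0, (((p:ℤ×ℤ).1:ℝ)/q, ((p:ℤ×ℤ).2:ℝ)/q) ∈ dualLq q \ Hperp := by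
    rintro ⟨⟨c, d⟩, hc⟩
    obtain ⟨hdvd, hne⟩ := hc
    constructor
    · exact (mem_dualLq q hq _).2 ⟨c, d, hdvd, rfl, rfl⟩
    · intro hmem
      have h1 := (mem_Hperp _).1 hmem
      simp only at h1
      have : (d:ℝ) = -c := by
        field_simp at h1
        linarith
      have : d = -c := by exact_mod_cast this
      exact hne (by omega)
  let fA : ↥D0 → ↥(dualLq q \ Hperp) := fun p =>
    ⟨(((p:ℤ×ℤ).1:ℝ)/q, ((p:ℤ×ℤ).2:ℝ)/q), fA_mem p⟩
  have fAbij : Function.Bijective fA := by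
    constructor
    · rintro ⟨⟨c, d⟩, hp⟩ ⟨⟨c', d'⟩, hp'⟩ h
      simp only [fA, Subtype.mk.injEq, Prod.mk.injEq] at h
      exact Subtype.ext (Prod.ext (castdiv_inj _ _ h.1) (castdiv_inj _ _ h.2))
    · rintro ⟨w, hw1, hw2⟩
      obtain ⟨c, d, hdvd, h1, h2⟩ := (mem_dualLq q hq w).1 hw1
      have hne : c + d ≠ 0 := by
        intro h0
        apply hw2
        rw [mem_Hperp]
        have hd : d = -c := by omega
        rw [h1, h2, hd]
        push_cast
        ring
      refine ⟨⟨(c, d), ⟨hdvd, hne⟩⟩, ?_⟩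
      apply Subtype.ext
      show ((c:ℝ)/q, (d:ℝ)/q) = w
      exact Prod.ext h1.symm h2.symm
  have hA : (∑' w : ↥(dualLq q \ Hperp),
        (ft2 (fun v => gauss (v.1 / s) * gauss (v.2 / s)) (w : ℝ × ℝ)).re)
      = s ^ 2 * SD0 := by
    rw [← (Equiv.ofBijective fA fAbij).tsum_eq, hSD0, ← tsum_mul_left]
    refine tsum_congr fun p => ?_
    show (ft2 _ ((((p:ℤ×ℤ).1:ℝ)/q, ((p:ℤ×ℤ).2:ℝ)/q))).re = _
    rw [ft2_gauss s hs, Complex.ofReal_re]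
    congr 1
    show _ = Real.exp (-(π * ((s/q) ^ 2 * (((p:ℤ×ℤ).1:ℝ)) ^ 2))) *
      Real.exp (-(π * ((s/q) ^ 2 * (((p:ℤ×ℤ).2:ℝ)) ^ 2)))
    rw [← Real.exp_add]
    congr 1
    field_simp
    ring
  -- the dual ∩ Hperp sum
  have fB_mem : ∀ c : ℤ, ((c:ℝ)/q, -((c:ℝ)/q)) ∈ dualLq q ∩ Hperp := by
    intro c
    constructor
    · refine (mem_dualLq q hq _).2 ⟨c, -c, by simp, rfl, ?_⟩
      push_cast
      ring
    · exact (mem_Hperp _).2 rfl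
  let fB : ℤ → ↥(dualLq q ∩ Hperp) := fun c => ⟨((c:ℝ)/q, -((c:ℝ)/q)), fB_mem c⟩
  have fBbij : Function.Bijective fB := by
    constructor
    · intro c c' h
      simp only [fB, Subtype.mk.injEq, Prod.mk.injEq] at h
      exact castdiv_inj _ _ h.1
    · rintro ⟨w, hw1, hw2⟩
      obtain ⟨c, d, hdvd, h1, h2⟩ := (mem_dualLq q hq w).1 hw1
      have hperp := (mem_Hperp w).1 hw2
      refine ⟨c, ?_⟩
      apply Subtype.ext
      show ((c:ℝ)/q, -((c:ℝ)/q)) = w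
      refine Prod.ext h1.symm ?_
      show -((c:ℝ)/q) = w.2
      rw [hperp, h1]
  have hB : (∑' w : ↥(dualLq q ∩ Hperp),
        (ft2 (fun v => gauss (v.1 / s) * gauss (v.2 / s)) (w : ℝ × ℝ)).re)
      = s ^ 2 * SDz := by
    rw [← (Equiv.ofBijective fB fBbij).tsum_eq, hSDz_eq, ← tsum_mul_left]
    refine tsum_congr fun c => ?_
    show (ft2 _ (((c:ℝ)/q, -((c:ℝ)/q)))).re = _
    rw [ft2_gauss s hs, Complex.ofReal_re]
    congr 1
    show _ = Real.exp (-(π * ((s/q) ^ 2 * ((c:ℝ)) ^ 2))) *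
      Real.exp (-(π * ((s/q) ^ 2 * (((-c : ℤ):ℝ)) ^ 2)))
    rw [← Real.exp_add]
    congr 1
    push_cast
    field_simp
    ring
  -- splitting the full dual sum
  have hDuni : {p : ℤ × ℤ | (q:ℤ) ∣ p.1 + p.2} = D0 ∪ Dz := by
    ext p
    simp only [hD0, hDz, Set.mem_setOf_eq, Set.mem_union]
    constructor
    · intro h
      by_cases h0 : p.1 + p.2 = 0
      · exact Or.inr h0
      · exact Or.inl ⟨h, h0⟩
    · rintro (⟨h, _⟩ | h)
      · exact h
      · simp [h]
  have hdisj : Disjoint D0 Dz := by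
    rw [Set.disjoint_left]
    rintro p ⟨_, hne⟩ h0
    exact hne h0
  have hsplit : ∑' p : ↥(D0 ∪ Dz), g ↑p = SD0 + SDz :=
    Summable.tsum_union_disjoint hdisj (gsum.subtype _) (gsum.subtype _)
  -- full dual sum as a theta sum
  let fD : ℤ × ℤ → ↥(D0 ∪ Dz) := fun p =>
    ⟨(-p.1, p.1 + q * p.2), by
      rw [← hDuni]
      exact ⟨p.2, by ring⟩⟩
  have fDbij : Function.Bijective fD := by
    constructor
    · intro p p' h
      simp only [fD, Subtype.mk.injEq, Prod.mk.injEq, neg_inj] at h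
      obtain ⟨h1, h2⟩ := h
      rw [h1] at h2
      have hqz : (q:ℤ) ≠ 0 := by exact_mod_cast hq.ne'
      have : (q:ℤ) * p.2 = q * p'.2 := by omega
      exact Prod.ext h1 (mul_left_cancel₀ hqz this)
    · rintro ⟨⟨c, d⟩, hp⟩
      have hdvd : (q:ℤ) ∣ c + d := by
        rw [← hDuni] at hp
        exact hp
      obtain ⟨e, he⟩ := hdvd
      refine ⟨(-c, e), ?_⟩
      apply Subtype.ext
      show (-(-c), -c + (q:ℤ) * e) = (c, d)
      refine Prod.ext (by simp) ?_
      show -c + (q:ℤ) * e = d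
      omega
  have hD : ∑' p : ℤ × ℤ,
      Real.exp (-(π * ((s/q) ^ 2 * (((p.1:ℝ)) ^ 2 + ((p.1:ℝ) + q * p.2) ^ 2))))
      = ∑' p : ↥(D0 ∪ Dz), g ↑p := by
    rw [← (Equiv.ofBijective fD fDbij).tsum_eq]
    refine tsum_congr fun p => ?_
    show _ = g (-p.1, p.1 + q * p.2)
    rw [hg]
    show _ = Real.exp _ * Real.exp _
    rw [← Real.exp_add]
    congr 1
    push_cast
    ring
  -- the lattice sum
  have hLfs : fsLq gauss s q = ∑' p : ℤ × ℤ,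
      Real.exp (-(π * ((1/s) ^ 2 * (((p.1:ℝ)) ^ 2 + ((p.1:ℝ) + q * p.2) ^ 2)))) := by
    unfold fsLq
    have fL_mem : ∀ p : ℤ × ℤ, (((p.1:ℝ)), ((p.1:ℝ) + q * p.2)) ∈ LqSet q :=
      fun p => ⟨p.1, 0, p.2, by push_cast; ring, by push_cast; ring⟩
    let fL : ℤ × ℤ → ↥(LqSet q) := fun p => ⟨(((p.1:ℝ)), ((p.1:ℝ) + q * p.2)), fL_mem p⟩
    have fLbij : Function.Bijective fL := by
      constructor
      · intro p p' h
        simp only [fL, Subtype.mk.injEq, Prod.mk.injEq] at h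
        obtain ⟨h1, h2⟩ := h
        have h1' : p.1 = p'.1 := by exact_mod_cast h1
        rw [h1'] at h2
        have h2' : (q:ℝ) * p.2 = q * p'.2 := by linarith
        have : (p.2:ℝ) = p'.2 := mul_left_cancel₀ hq0 h2'
        exact Prod.ext h1' (by exact_mod_cast this)
      · rintro ⟨v, z, w₁, w₂, h1, h2⟩
        refine ⟨(z + q * w₁, w₂ - w₁), ?_⟩
        apply Subtype.ext
        show (((z + q * w₁ : ℤ) : ℝ), _) = v
        refine Prod.ext ?_ ?_
        · show ((z + q * w₁ : ℤ) : ℝ) = v.1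
          rw [h1]; push_cast; ring
        · show ((z + q * w₁ : ℤ) : ℝ) + q * ((w₂ - w₁ : ℤ) : ℝ) = v.2
          rw [h2]; push_cast; ring
    rw [← (Equiv.ofBijective fL fLbij).tsum_eq]
    refine tsum_congr fun p => ?_
    show gauss ((p.1:ℝ)/s) * gauss (((p.1:ℝ) + q * p.2)/s) = _
    unfold gauss
    rw [← Real.exp_add]
    congr 1
    field_simp
    ring
  -- LHS chain
  have lhs_eq : fsLq gauss s q = s^2/q * (SD0 + SDz) := by
    rw [hLfs, theta_key (1/s) (by positivity) q hq]
    rw [show ∑' p : ℤ × ℤ,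
        Real.exp (-(π * ((1/((q:ℝ) * (1/s))) ^ 2 * (((p.1:ℝ)) ^ 2 + ((p.1:ℝ) + q * p.2) ^ 2))))
        = ∑' p : ℤ × ℤ,
        Real.exp (-(π * ((s/q) ^ 2 * (((p.1:ℝ)) ^ 2 + ((p.1:ℝ) + q * p.2) ^ 2)))) from
      tsum_congr fun p => by
        congr 2
        rw [show (1/((q:ℝ) * (1/s))) = s/q by field_simp]]
    rw [hD, hsplit]
    congr 1
    field_simp
  -- 1 + roughZ
  have hts : (1/((q:ℝ) / (s * Real.sqrt 2)))^2 = 2 * (s/q)^2 := by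
    rw [one_div_div, div_pow, mul_pow, h2sq]
    ring
  have rz : 1 + roughZ ((q:ℝ) / (s * Real.sqrt 2)) = (s * Real.sqrt 2 / q) * SDz := by
    have hnum : (∑' k : {k : ℤ // k ≠ 0},
        (ft1 (fun x => gauss (x / ((q:ℝ) / (s * Real.sqrt 2)))) ((k : ℤ) : ℝ)).re)
        = ((q:ℝ) / (s * Real.sqrt 2)) * ∑' k : {k : ℤ // k ≠ 0},
            Real.exp (-(π * (((q:ℝ) / (s * Real.sqrt 2)) ^ 2 * ((k : ℤ):ℝ) ^ 2))) := by
      rw [← tsum_mul_left]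
      exact tsum_congr fun k => by rw [ft1_gauss _ ht, Complex.ofReal_re]
    have hden : (ft1 (fun x => gauss (x / ((q:ℝ) / (s * Real.sqrt 2)))) 0).re
        = (q:ℝ) / (s * Real.sqrt 2) := by
      rw [ft1_gauss _ ht, Complex.ofReal_re]
      norm_num
    have hrz : roughZ ((q:ℝ) / (s * Real.sqrt 2)) = ∑' k : {k : ℤ // k ≠ 0},
        Real.exp (-(π * (((q:ℝ) / (s * Real.sqrt 2)) ^ 2 * ((k : ℤ):ℝ) ^ 2))) := by
      unfold roughZ
      rw [hnum, hden, mul_div_cancel_left₀ _ ht.ne']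
    have hsumt := summable_gauss' _ ht
    have hcompl := Summable.tsum_add_tsum_compl (s := {(0:ℤ)})
      (f := fun k : ℤ => Real.exp (-(π * (((q:ℝ) / (s * Real.sqrt 2)) ^ 2 * (k:ℝ) ^ 2))))
      (hsumt.subtype _) (hsumt.subtype _)
    have h0sum := tsum_singleton (0:ℤ)
      (fun k : ℤ => Real.exp (-(π * (((q:ℝ) / (s * Real.sqrt 2)) ^ 2 * (k:ℝ) ^ 2))))
    rw [h0sum] at hcompl
    have h0 : Real.exp (-(π * (((q:ℝ) / (s * Real.sqrt 2)) ^ 2 * ((0:ℤ):ℝ) ^ 2))) = 1 := by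
      norm_num
    rw [h0] at hcompl
    have hcompl2 : (1:ℝ) + roughZ ((q:ℝ) / (s * Real.sqrt 2))
        = ∑' k : ℤ, Real.exp (-(π * (((q:ℝ) / (s * Real.sqrt 2)) ^ 2 * (k:ℝ) ^ 2))) := by
      rw [hrz, ← hcompl]
      congr 1
    rw [hcompl2]
    -- Poisson summation in 1D
    have hP := Real.tsum_exp_neg_mul_int_sq (a := ((q:ℝ) / (s * Real.sqrt 2)) ^ 2)
      (by positivity)
    rw [rpow_sq_half _ ht] at hP
    rw [show ∑' k : ℤ, Real.exp (-(π * (((q:ℝ) / (s * Real.sqrt 2)) ^ 2 * (k:ℝ) ^ 2)))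
        = ∑' k : ℤ, Real.exp (-π * ((q:ℝ) / (s * Real.sqrt 2)) ^ 2 * (k:ℝ) ^ 2) from
      tsum_congr fun k => by rw [show -(π * (((q:ℝ) / (s * Real.sqrt 2)) ^ 2 * (k:ℝ) ^ 2))
        = -π * ((q:ℝ) / (s * Real.sqrt 2)) ^ 2 * (k:ℝ) ^ 2 by ring]]
    rw [hP]
    have hterm : ∀ c : ℤ, Real.exp (-π / ((q:ℝ) / (s * Real.sqrt 2)) ^ 2 * (c:ℝ) ^ 2)
        = g (c, -c) := by
      intro c
      show _ = Real.exp (-(π * ((s/q) ^ 2 * ((c:ℝ)) ^ 2))) *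
        Real.exp (-(π * ((s/q) ^ 2 * (((-c : ℤ):ℝ)) ^ 2)))
      rw [← Real.exp_add]
      congr 1
      have h1 : -π / ((q:ℝ) / (s * Real.sqrt 2)) ^ 2 * (c:ℝ) ^ 2
          = -(π * ((1/((q:ℝ) / (s * Real.sqrt 2)))^2 * (c:ℝ) ^ 2)) := by
        field_simp
      rw [h1, hts]
      push_cast
      ring
    rw [show (∑' c : ℤ, Real.exp (-π / ((q:ℝ) / (s * Real.sqrt 2)) ^ 2 * (c:ℝ) ^ 2))
        = ∑' c : ℤ, g (c, -c) from tsum_congr hterm]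
    rw [← hSDz_eq]
    congr 1
    rw [one_div_div]
  -- 1 + roughLqH
  have rrough : 1 + roughLqH q s = (SD0 + SDz)/SDz := by
    unfold roughLqH
    rw [hA, hB, mul_div_mul_left _ _ (by positivity : (s:ℝ) ^ 2 ≠ 0)]
    field_simp
    ring
  -- final algebra
  rw [lhs_eq, rz, rrough]
  have hconst : s / Real.sqrt 2 * (s * Real.sqrt 2 / q) = s ^ 2 / q := by
    field_simp
  have hcancel : SDz * ((SD0 + SDz)/SDz) = SD0 + SDz := by
    field_simp
  calc s ^ 2 / (q:ℝ) * (SD0 + SDz)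
      = (s / Real.sqrt 2 * (s * Real.sqrt 2 / q)) * (SDz * ((SD0 + SDz)/SDz)) := by
        rw [hconst, hcancel]
    _ = s / Real.sqrt 2 * (s * Real.sqrt 2 / q * SDz) * ((SD0 + SDz)/SDz) := by ring

end
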